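/- Let I and J be nonempty sets and let G be a discrete group. Then ℓ¹(B(I,G)) and ℓ¹(B(J,G)) are self-induced Banach algebras and they are Morita equivalent in the sense of Grønbæk. -/

import Mathlib

open scoped TensorProduct BigOperators ENNReal
open Filter

noncomputable section

/-- `ℓ¹(X)`: the Banach space of absolutely summable complex functions on `X`. -/
abbrev L1 (X : Type) : Type := lp (fun _ : X => ℂ) 1

open Classical in
/-- The point mass `δ_x` in `ℓ¹(X)`. -/
noncomputable def delta {X : Type} (x : X) : L1 X := lp.single 1 x (1 : ℂ)

/-- The projective tensor norm of an element of the algebraic tensor product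
`E ⊗[ℂ] F`: the infimum of `∑ ‖xᵢ‖ ‖yᵢ‖` over all finite representations
`z = ∑ xᵢ ⊗ yᵢ`. -/
def projNorm {E F : Type} [SeminormedAddCommGroup E] [NormedSpace ℂ E]
    [SeminormedAddCommGroup F] [NormedSpace ℂ F] (z : E ⊗[ℂ] F) : ℝ :=
  sInf {r : ℝ | ∃ (n : ℕ) (x : Fin n → E) (y : Fin n → F),
    z = ∑ i, x i ⊗ₜ[ℂ] y i ∧ r = ∑ i, ‖x i‖ * ‖y i‖}

/-- `(T, φ)` is a realization of the completed projective tensor product `E ⊗̂ F`: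
`T` is a Banach space, the canonical map from the algebraic tensor product is an
isometry with respect to the projective tensor norm, and it has dense range. -/
structure IsProjTensor (E F T : Type) [SeminormedAddCommGroup E] [NormedSpace ℂ E]
    [SeminormedAddCommGroup F] [NormedSpace ℂ F]
    [SeminormedAddCommGroup T] [NormedSpace ℂ T]
    (φ : E →ₗ[ℂ] F →ₗ[ℂ] T) : Prop where
  complete : CompleteSpace T
  isometry : ∀ z : E ⊗[ℂ] F, ‖TensorProduct.lift φ z‖ = projNorm z
  dense : DenseRange ⇑(TensorProduct.lift φ)

/-- The closed linear span of the `A`-balancing relations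
`{x·a ⊗ y - x ⊗ a·y}` inside a realization `T` of `E ⊗̂ F`; the quotient
`T ⧸ balancer φ r l` is the `A`-module tensor product `E ⊗̂_A F`. -/
def balancer {A E F T : Type} [SeminormedAddCommGroup E] [NormedSpace ℂ E]
    [SeminormedAddCommGroup F] [NormedSpace ℂ F]
    [SeminormedAddCommGroup T] [NormedSpace ℂ T]
    (φ : E →ₗ[ℂ] F →ₗ[ℂ] T) (r : E → A → E) (l : A → F → F) : Submodule ℂ T :=
  (Submodule.span ℂ {z : T | ∃ (x : E) (a : A) (y : F), z = φ (r x a) y - φ x (l a y)}).topologicalClosure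

/-- A left Banach `A`-module `(E, l)` is `A`-induced: for every realization `T` of
`A ⊗̂ E`, the canonical map `A ⊗̂_A E → E`, `a ⊗ x ↦ a·x`, is a topological
isomorphism. -/
def LeftInduced {A E : Type} [SeminormedAddCommGroup A] [NormedSpace ℂ A]
    [SeminormedAddCommGroup E] [NormedSpace ℂ E]
    (mulA : A →L[ℂ] A →L[ℂ] A) (l : A →L[ℂ] E →L[ℂ] E) : Prop :=
  ∀ (T : Type) [SeminormedAddCommGroup T] [NormedSpace ℂ T]
    (φ : A →ₗ[ℂ] E →ₗ[ℂ] T), IsProjTensor A E T φ →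
    ∃ e : (T ⧸ balancer φ (fun a b => mulA a b) (fun a x => l a x)) ≃L[ℂ] E,
      ∀ (a : A) (x : E), e (Submodule.Quotient.mk (φ a x)) = l a x

/-- A right Banach `A`-module `(E, r)` is `A`-induced. -/
def RightInduced {A E : Type} [SeminormedAddCommGroup A] [NormedSpace ℂ A]
    [SeminormedAddCommGroup E] [NormedSpace ℂ E]
    (mulA : A →L[ℂ] A →L[ℂ] A) (r : E →L[ℂ] A →L[ℂ] E) : Prop :=
  ∀ (T : Type) [SeminormedAddCommGroup T] [NormedSpace ℂ T]
    (φ : E →ₗ[ℂ] A →ₗ[ℂ] T), IsProjTensor E A T φ →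
    ∃ e : (T ⧸ balancer φ (fun x a => r x a) (fun a b => mulA a b)) ≃L[ℂ] E,
      ∀ (x : E) (a : A), e (Submodule.Quotient.mk (φ x a)) = r x a

/-- A Banach algebra `(A, mul)` is self-induced: the multiplication map
`A ⊗̂_A A → A` is an isomorphism of `A`-bimodules. -/
def SelfInduced {A : Type} [SeminormedAddCommGroup A] [NormedSpace ℂ A]
    (mulA : A →L[ℂ] A →L[ℂ] A) : Prop :=
  ∀ (T : Type) [SeminormedAddCommGroup T] [NormedSpace ℂ T]
    (φ : A →ₗ[ℂ] A →ₗ[ℂ] T), IsProjTensor A A T φ →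
    ∃ e : (T ⧸ balancer φ (fun a b => mulA a b) (fun a b => mulA a b)) ≃L[ℂ] A,
      (∀ a b : A, e (Submodule.Quotient.mk (φ a b)) = mulA a b) ∧
      (∀ c a b : A, e (Submodule.Quotient.mk (φ (mulA c a) b))
          = mulA c (e (Submodule.Quotient.mk (φ a b)))) ∧
      (∀ a b c : A, e (Submodule.Quotient.mk (φ a (mulA b c)))
          = mulA (e (Submodule.Quotient.mk (φ a b))) c)

/-- `(E, l, r)` is a Banach bimodule: left over `(A, mulL)`, right over `(B, mulR)`. -/
def IsBimoduleLaw {A B E : Type} [SeminormedAddCommGroup A] [NormedSpace ℂ A]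
    [SeminormedAddCommGroup B] [NormedSpace ℂ B]
    [SeminormedAddCommGroup E] [NormedSpace ℂ E]
    (mulL : A →L[ℂ] A →L[ℂ] A) (mulR : B →L[ℂ] B →L[ℂ] B)
    (l : A →L[ℂ] E →L[ℂ] E) (r : E →L[ℂ] B →L[ℂ] E) : Prop :=
  (∀ (a a' : A) (x : E), l (mulL a a') x = l a (l a' x)) ∧
  (∀ (x : E) (b b' : B), r (r x b) b' = r x (mulR b b')) ∧
  (∀ (a : A) (x : E) (b : B), r (l a x) b = l a (r x b))

/-- A witness for Morita equivalence of `(A, mulA)` and `(B, mulB)` in the sense of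
Grønbæk's characterization: two-sided induced Banach bimodules `P ∈ B-mod-A` and
`Q ∈ A-mod-B` with `P ⊗̂_A Q ≅ B` and `Q ⊗̂_B P ≅ A` as bimodules. -/
structure MoritaWitness (A B : Type) [NormedAddCommGroup A] [NormedSpace ℂ A]
    [NormedAddCommGroup B] [NormedSpace ℂ B]
    (mulA : A →L[ℂ] A →L[ℂ] A) (mulB : B →L[ℂ] B →L[ℂ] B) : Type 1 where
  P : Type
  Q : Type
  [iP1 : NormedAddCommGroup P] [iP2 : NormedSpace ℂ P] [iP3 : CompleteSpace P]
  [iQ1 : NormedAddCommGroup Q] [iQ2 : NormedSpace ℂ Q] [iQ3 : CompleteSpace Q]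
  lP : B →L[ℂ] P →L[ℂ] P
  rP : P →L[ℂ] A →L[ℂ] P
  lQ : A →L[ℂ] Q →L[ℂ] Q
  rQ : Q →L[ℂ] B →L[ℂ] Q
  lawP : IsBimoduleLaw mulB mulA lP rP
  lawQ : IsBimoduleLaw mulA mulB lQ rQ
  indPl : LeftInduced mulB lP
  indPr : RightInduced mulA rP
  indQl : LeftInduced mulA lQ
  indQr : RightInduced mulB rQ
  isoB : ∀ (T : Type) [SeminormedAddCommGroup T] [NormedSpace ℂ T]
    (φ : P →ₗ[ℂ] Q →ₗ[ℂ] T), IsProjTensor P Q T φ →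
    ∃ e : (T ⧸ balancer φ (fun x a => rP x a) (fun a y => lQ a y)) ≃L[ℂ] B,
      (∀ (b : B) (p : P) (q : Q), e (Submodule.Quotient.mk (φ (lP b p) q))
          = mulB b (e (Submodule.Quotient.mk (φ p q)))) ∧
      (∀ (b : B) (p : P) (q : Q), e (Submodule.Quotient.mk (φ p (rQ q b)))
          = mulB (e (Submodule.Quotient.mk (φ p q))) b)
  isoA : ∀ (T : Type) [SeminormedAddCommGroup T] [NormedSpace ℂ T]
    (φ : Q →ₗ[ℂ] P →ₗ[ℂ] T), IsProjTensor Q P T φ →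
    ∃ e : (T ⧸ balancer φ (fun y b => rQ y b) (fun b x => lP b x)) ≃L[ℂ] A,
      (∀ (a : A) (q : Q) (p : P), e (Submodule.Quotient.mk (φ (lQ a q) p))
          = mulA a (e (Submodule.Quotient.mk (φ q p)))) ∧
      (∀ (a : A) (q : Q) (p : P), e (Submodule.Quotient.mk (φ q (rP p a)))
          = mulA (e (Submodule.Quotient.mk (φ q p))) a)

/-- Morita equivalence of self-induced Banach algebras, via Grønbæk's
characterization. -/
def MoritaEquivalent {A B : Type} [NormedAddCommGroup A] [NormedSpace ℂ A]
    [NormedAddCommGroup B] [NormedSpace ℂ B]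
    (mulA : A →L[ℂ] A →L[ℂ] A) (mulB : B →L[ℂ] B →L[ℂ] B) : Prop :=
  Nonempty (MoritaWitness A B mulA mulB)

/-- The Brandt semigroup `B(I,G) = (I × G × I) ∪ {∘}`, with `∘ = none`. -/
abbrev Brandt (I G : Type) : Type := Option (I × G × I)

open Classical in
/-- Multiplication of the Brandt semigroup: `(i,g,j)(i',g',j') = (i,gg',j')` if
`j = i'` and `∘` otherwise; `∘` is absorbing. -/
noncomputable instance {I G : Type} [Mul G] : Mul (Brandt I G) :=
  ⟨fun a b => match a, b with
    | some (i, g, j), some (i', g', j') => if j = i' then some (i, g * g', j') else none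
    | _, _ => none⟩

open Classical in
/-- The convolution product on `ℓ¹(S)` for a (semi)group `S`:
`(a * b)(s) = ∑_{uv = s} a(u) b(v)`. -/
noncomputable def l1conv {S : Type} [Mul S] (a b : L1 S) (s : S) : ℂ :=
  ∑' p : S × S, if p.1 * p.2 = s then a p.1 * b p.2 else 0


/-! ### Auxiliary development for the proof -/

section BrandtDev

set_option maxHeartbeats 1000000
set_option synthInstance.maxHeartbeats 1000000

open Classical

namespace BrandtAux

variable {X Y Z W : Type}

/-! #### Basic `ℓ¹` lemmas -/

lemma L1hasSum_norm (f : L1 X) : HasSum (fun x => ‖f x‖) ‖f‖ := by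
  have h := lp.hasSum_norm (p := (1 : ℝ≥0∞)) (E := fun _ : X => ℂ)
    (by norm_num) f
  simpa using h

lemma summable_norm (f : L1 X) : Summable fun x => ‖f x‖ :=
  (L1hasSum_norm f).summable

lemma norm_eq_tsum (f : L1 X) : ‖f‖ = ∑' x, ‖f x‖ :=
  (L1hasSum_norm f).tsum_eq.symm

open Classical in
lemma delta_apply (x j : X) : (delta x : L1 X) j = if j = x then 1 else 0 := by
  rw [delta, lp.single_apply]
  split_ifs with h
  · subst h; simp
  · simp [h]

lemma norm_delta (x : X) : ‖(delta x : L1 X)‖ = 1 := by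
  have h := lp.norm_single (p := (1 : ℝ≥0∞)) (E := fun _ : X => ℂ)
    (by norm_num) x (1 : ℂ)
  simpa [delta] using h

lemma single_eq_smul_delta (c : ℂ) (x : X) :
    (lp.single 1 x c : L1 X) = c • (delta x : L1 X) := by
  have h := lp.single_smul (p := (1 : ℝ≥0∞)) (𝕜 := ℂ) (E := fun _ : X => ℂ) x c (1 : ℂ)
  simpa [delta] using h

lemma hasSum_delta (f : L1 X) : HasSum (fun x => f x • (delta x : L1 X)) f := by
  have h := lp.hasSum_single (p := (1 : ℝ≥0∞)) (E := fun _ : X => ℂ)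
    ENNReal.one_ne_top f
  refine h.congr_fun ?_
  intro x
  exact (single_eq_smul_delta (f x) x).symm

/-- Two continuous linear maps out of `ℓ¹` that agree on point masses agree. -/
lemma ext_delta {M : Type} [SeminormedAddCommGroup M] [NormedSpace ℂ M] [T2Space M]
    (f g : L1 X →L[ℂ] M) (h : ∀ x, f (delta x) = g (delta x)) (a : L1 X) :
    f a = g a := by
  have hf := (hasSum_delta a).mapL f
  have hg := (hasSum_delta a).mapL g
  simp only [map_smul] at hf hg
  simp only [h] at hf
  exact hf.unique hg

/-- Evaluation at a point as a continuous linear functional on `ℓ¹`. -/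
def evalL (s : X) : L1 X →L[ℂ] ℂ :=
  LinearMap.mkContinuous
    { toFun := fun f => f s
      map_add' := fun f g => by simp [lp.coeFn_add]
      map_smul' := fun c f => by simp [lp.coeFn_smul] } 1
    (fun f => by
      show ‖f s‖ ≤ 1 * ‖f‖
      simpa using lp.norm_apply_le_norm (p := (1 : ℝ≥0∞)) one_ne_zero f s)

@[simp] lemma evalL_apply (s : X) (f : L1 X) : evalL s f = f s := rfl


/-! #### The convolution-type bilinear maps `ℓ¹(X) × ℓ¹(Y) → ℓ¹(Z)` induced by `μ : X → Y → Z` -/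

lemma summable_norm_mul (a : L1 X) (b : L1 Y) :
    Summable fun p : X × Y => ‖a p.1‖ * ‖b p.2‖ :=
  (summable_norm a).mul_of_nonneg (summable_norm b)
    (fun _ => norm_nonneg _) (fun _ => norm_nonneg _)

lemma tsum_norm_mul (a : L1 X) (b : L1 Y) :
    ∑' p : X × Y, ‖a p.1‖ * ‖b p.2‖ = ‖a‖ * ‖b‖ := by
  rw [norm_eq_tsum a, norm_eq_tsum b]
  exact (tsum_mul_tsum_of_summable_norm
    ((summable_norm a).congr fun x => (norm_norm _).symm)
    ((summable_norm b).congr fun x => (norm_norm _).symm)).symm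

lemma norm_convTerm (μ : X → Y → Z) (a : L1 X) (b : L1 Y) (p : X × Y) :
    ‖(a p.1 * b p.2) • (delta (μ p.1 p.2) : L1 Z)‖ = ‖a p.1‖ * ‖b p.2‖ := by
  rw [norm_smul, norm_delta, mul_one, norm_mul]

lemma summable_convTerm (μ : X → Y → Z) (a : L1 X) (b : L1 Y) :
    Summable fun p : X × Y => (a p.1 * b p.2) • (delta (μ p.1 p.2) : L1 Z) := by
  apply Summable.of_norm
  exact (summable_norm_mul a b).congr fun p => (norm_convTerm μ a b p).symm

/-- The convolution-type product associated to a "multiplication" `μ : X → Y → Z`. -/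
def convCore (μ : X → Y → Z) (a : L1 X) (b : L1 Y) : L1 Z :=
  ∑' p : X × Y, (a p.1 * b p.2) • (delta (μ p.1 p.2) : L1 Z)

lemma norm_convCore_le (μ : X → Y → Z) (a : L1 X) (b : L1 Y) :
    ‖convCore μ a b‖ ≤ ‖a‖ * ‖b‖ := by
  refine (norm_tsum_le_tsum_norm ?_).trans ?_
  · exact (summable_norm_mul a b).congr fun p => (norm_convTerm μ a b p).symm
  · rw [tsum_congr fun p => norm_convTerm μ a b p, tsum_norm_mul]

lemma convCore_add_left (μ : X → Y → Z) (a a' : L1 X) (b : L1 Y) :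
    convCore μ (a + a') b = convCore μ a b + convCore μ a' b := by
  unfold convCore
  rw [← Summable.tsum_add (summable_convTerm μ a b) (summable_convTerm μ a' b)]
  refine tsum_congr fun p => ?_
  have h : (a + a') p.1 = a p.1 + a' p.1 := by simp [lp.coeFn_add]
  rw [h, add_mul, add_smul]

lemma convCore_smul_left (μ : X → Y → Z) (c : ℂ) (a : L1 X) (b : L1 Y) :
    convCore μ (c • a) b = c • convCore μ a b := by
  unfold convCore
  rw [← ((summable_convTerm μ a b).hasSum.const_smul c).tsum_eq]
  refine tsum_congr fun p => ?_
  have h : (c • a) p.1 = c * a p.1 := by simp [lp.coeFn_smul]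
  rw [h, mul_assoc, mul_smul]

lemma convCore_add_right (μ : X → Y → Z) (a : L1 X) (b b' : L1 Y) :
    convCore μ a (b + b') = convCore μ a b + convCore μ a b' := by
  unfold convCore
  rw [← Summable.tsum_add (summable_convTerm μ a b) (summable_convTerm μ a b')]
  refine tsum_congr fun p => ?_
  have h : (b + b') p.2 = b p.2 + b' p.2 := by simp [lp.coeFn_add]
  rw [h, mul_add, add_smul]

lemma convCore_smul_right (μ : X → Y → Z) (c : ℂ) (a : L1 X) (b : L1 Y) :
    convCore μ a (c • b) = c • convCore μ a b := by
  unfold convCore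
  rw [← ((summable_convTerm μ a b).hasSum.const_smul c).tsum_eq]
  refine tsum_congr fun p => ?_
  have h : (c • b) p.2 = c * b p.2 := by simp [lp.coeFn_smul]
  rw [h, show a p.1 * (c * b p.2) = c * (a p.1 * b p.2) by ring, mul_smul]

/-- `convCore` as a continuous bilinear map. -/
def convL (μ : X → Y → Z) : L1 X →L[ℂ] L1 Y →L[ℂ] L1 Z :=
  LinearMap.mkContinuous₂
    (LinearMap.mk₂ ℂ (convCore μ) (convCore_add_left μ) (convCore_smul_left μ)
      (convCore_add_right μ) (convCore_smul_right μ)) 1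
    (fun a b => by simpa using norm_convCore_le μ a b)

lemma convL_apply (μ : X → Y → Z) (a : L1 X) (b : L1 Y) :
    convL μ a b = convCore μ a b := rfl

lemma convL_norm_le (μ : X → Y → Z) (a : L1 X) (b : L1 Y) :
    ‖convL μ a b‖ ≤ ‖a‖ * ‖b‖ := norm_convCore_le μ a b

lemma convL_delta (μ : X → Y → Z) (x : X) (y : Y) :
    convL μ (delta x) (delta y) = delta (μ x y) := by
  rw [convL_apply, convCore]
  rw [tsum_eq_single (x, y)]
  · simp [delta_apply]
  · intro p hp
    have : p.1 ≠ x ∨ p.2 ≠ y := by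
      by_contra hcon
      push_neg at hcon
      exact hp (Prod.ext hcon.1 hcon.2)
    rcases this with h1 | h1 <;> simp [delta_apply, if_neg h1]

open Classical in
lemma convL_eval (μ : X → Y → Z) (a : L1 X) (b : L1 Y) (s : Z) :
    (convL μ a b) s = ∑' p : X × Y, if μ p.1 p.2 = s then a p.1 * b p.2 else 0 := by
  have h := ((summable_convTerm μ a b).hasSum.mapL (evalL s)).tsum_eq
  have h2 : (convL μ a b) s = evalL s (convCore μ a b) := rfl
  rw [h2, convCore, ← h]
  refine tsum_congr fun p => ?_
  have h3 : evalL s ((a p.1 * b p.2) • (delta (μ p.1 p.2) : L1 Z))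
      = (a p.1 * b p.2) * (if s = μ p.1 p.2 then 1 else 0) := by
    simp [delta_apply]
  rw [h3, mul_ite, mul_one, mul_zero]
  exact if_congr eq_comm rfl rfl

/-- The fundamental trilinear "associativity transfer": if the point-level maps satisfy
`ν (μ x y) v = ν' x (μ' y v)` then the corresponding convolution operators satisfy the
same identity. -/
lemma conv_conv {X Y U V U' R : Type} (μ : X → Y → U) (ν : U → V → R)
    (μ' : Y → V → U') (ν' : X → U' → R)
    (hcomp : ∀ x y v, ν (μ x y) v = ν' x (μ' y v))
    (a : L1 X) (b : L1 Y) (c : L1 V) :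
    convL ν (convL μ a b) c = convL ν' a (convL μ' b c) := by
  have hA : ∀ (y : Y) (v : V) (a : L1 X),
      convL ν (convL μ a (delta y)) (delta v) = convL ν' a (convL μ' (delta y) (delta v)) := by
    intro y v a
    have := ext_delta (((convL ν).flip (delta v)).comp ((convL μ).flip (delta y)))
        ((convL ν').flip (convL μ' (delta y) (delta v)))
        (fun x => by simp [ContinuousLinearMap.flip_apply, convL_delta, hcomp]) a
    simpa using this
  have hB : ∀ (v : V) (a : L1 X) (b : L1 Y),
      convL ν (convL μ a b) (delta v) = convL ν' a (convL μ' b (delta v)) := by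
    intro v a b
    have := ext_delta (((convL ν).flip (delta v)).comp (convL μ a))
        ((convL ν' a).comp ((convL μ').flip (delta v)))
        (fun y => by simpa using hA y v a) b
    simpa using this
  have := ext_delta ((convL ν) (convL μ a b)) ((convL ν' a).comp (convL μ' b))
      (fun v => by simpa using hB v a b) c
  simpa using this


/-! #### Summation operator `ℓ¹(X) → M` attached to a bounded family of vectors -/

section SumL

variable {M : Type} [SeminormedAddCommGroup M] [NormedSpace ℂ M] [CompleteSpace M] [T2Space M]

lemma summable_smul_of_bdd (v : X → M) {C : ℝ} (hv : ∀ x, ‖v x‖ ≤ C) (f : L1 X) :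
    Summable fun x => f x • v x := by
  apply Summable.of_norm
  refine Summable.of_nonneg_of_le (fun _ => norm_nonneg _) (fun x => ?_)
    ((summable_norm f).mul_right C)
  rw [norm_smul]
  exact mul_le_mul_of_nonneg_left (hv x) (norm_nonneg _)

/-- Summation against a uniformly bounded family of vectors, as a continuous linear map. -/
def sumL (v : X → M) (C : ℝ) (hv : ∀ x, ‖v x‖ ≤ C) : L1 X →L[ℂ] M :=
  LinearMap.mkContinuous
    { toFun := fun f => ∑' x, f x • v x
      map_add' := fun f g => by
        rw [← Summable.tsum_add (summable_smul_of_bdd v hv f) (summable_smul_of_bdd v hv g)]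
        refine tsum_congr fun x => ?_
        have h : (f + g) x = f x + g x := by simp [lp.coeFn_add]
        rw [h, add_smul]
      map_smul' := fun c f => by
        simp only [RingHom.id_apply]
        rw [← ((summable_smul_of_bdd v hv f).hasSum.const_smul c).tsum_eq]
        refine tsum_congr fun x => ?_
        have h : (c • f) x = c * f x := by simp [lp.coeFn_smul]
        rw [h, mul_smul] } C
    (fun f => by
      refine (norm_tsum_le_tsum_norm ?_).trans ?_
      · refine Summable.of_nonneg_of_le (fun _ => norm_nonneg _) (fun x => ?_)
          ((summable_norm f).mul_right C)
        rw [norm_smul]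
        exact mul_le_mul_of_nonneg_left (hv x) (norm_nonneg _)
      · calc ∑' x, ‖f x • v x‖ ≤ ∑' x, ‖f x‖ * C := by
              refine Summable.tsum_le_tsum (fun x => ?_)
                (((summable_norm f).mul_right C).of_nonneg_of_le (fun _ => norm_nonneg _)
                  (fun x => by rw [norm_smul]; exact mul_le_mul_of_nonneg_left (hv x) (norm_nonneg _)))
                ((summable_norm f).mul_right C)
              rw [norm_smul]
              exact mul_le_mul_of_nonneg_left (hv x) (norm_nonneg _)
          _ = ‖f‖ * C := by rw [tsum_mul_right, ← norm_eq_tsum]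
          _ = C * ‖f‖ := mul_comm _ _)

lemma sumL_delta (v : X → M) (C : ℝ) (hv : ∀ x, ‖v x‖ ≤ C) (x : X) :
    sumL v C hv (delta x) = v x := by
  have h : sumL v C hv (delta x) = ∑' x', (delta x : L1 X) x' • v x' := rfl
  rw [h, tsum_eq_single x]
  · rw [delta_apply, if_pos rfl, one_smul]
  · intro x' hx'
    rw [delta_apply, if_neg hx', zero_smul]

end SumL

/-! #### Projective norm lemmas -/

section ProjNorm

variable {E F : Type} [SeminormedAddCommGroup E] [NormedSpace ℂ E]
  [SeminormedAddCommGroup F] [NormedSpace ℂ F]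

lemma projNorm_bddBelow (z : E ⊗[ℂ] F) :
    BddBelow {r : ℝ | ∃ (n : ℕ) (x : Fin n → E) (y : Fin n → F),
      z = ∑ i, x i ⊗ₜ[ℂ] y i ∧ r = ∑ i, ‖x i‖ * ‖y i‖} := by
  refine ⟨0, ?_⟩
  rintro r ⟨n, x, y, -, rfl⟩
  positivity

lemma projNorm_nonempty (z : E ⊗[ℂ] F) :
    Set.Nonempty {r : ℝ | ∃ (n : ℕ) (x : Fin n → E) (y : Fin n → F),
      z = ∑ i, x i ⊗ₜ[ℂ] y i ∧ r = ∑ i, ‖x i‖ * ‖y i‖} := by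
  obtain ⟨s, hs⟩ := TensorProduct.exists_finset z
  refine ⟨∑ i : Fin s.card, ‖((s.equivFin.symm i : s) : E × F).1‖ *
      ‖((s.equivFin.symm i : s) : E × F).2‖,
    s.card, fun i => ((s.equivFin.symm i : s) : E × F).1,
    fun i => ((s.equivFin.symm i : s) : E × F).2, ?_, rfl⟩
  rw [hs, ← Finset.sum_coe_sort s (fun p => p.1 ⊗ₜ[ℂ] p.2)]
  exact (Equiv.sum_comp s.equivFin.symm
    (fun p : s => ((p : E × F).1 ⊗ₜ[ℂ] (p : E × F).2))).symm

lemma projNorm_tmul_le (a : E) (b : F) : projNorm (a ⊗ₜ[ℂ] b) ≤ ‖a‖ * ‖b‖ := by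
  refine csInf_le (projNorm_bddBelow _) ?_
  exact ⟨1, fun _ => a, fun _ => b, by simp, by simp⟩

lemma norm_lift_le_projNorm {M : Type} [SeminormedAddCommGroup M] [NormedSpace ℂ M]
    (B : E →L[ℂ] F →L[ℂ] M) (hB : ∀ a b, ‖B a b‖ ≤ ‖a‖ * ‖b‖)
    (Blin : E →ₗ[ℂ] F →ₗ[ℂ] M) (hBlin : ∀ a b, Blin a b = B a b) (z : E ⊗[ℂ] F) :
    ‖TensorProduct.lift Blin z‖ ≤ projNorm z := by
  refine le_csInf (projNorm_nonempty z) ?_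
  rintro r ⟨n, x, y, hz, rfl⟩
  rw [hz, map_sum]
  refine (norm_sum_le _ _).trans (Finset.sum_le_sum fun i _ => ?_)
  rw [TensorProduct.lift.tmul, hBlin]
  exact hB _ _

end ProjNorm

/-! #### The reachability relation encoding the balancing moves -/

inductive Reach {X W Y : Type} (ρ : X → W → X) (lam : W → Y → Y) : X × Y → X × Y → Prop
  | refl (p : X × Y) : Reach ρ lam p p
  | symm {p q : X × Y} : Reach ρ lam p q → Reach ρ lam q p
  | trans {p q r : X × Y} : Reach ρ lam p q → Reach ρ lam q r → Reach ρ lam p r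
  | fwd (x : X) (w : W) (y : Y) : Reach ρ lam (ρ x w, y) (x, lam w y)



/-! #### Extension of continuous linear maps along a dense isometric inclusion,
for a seminormed target (variant of `ContinuousLinearMap.extend`). -/

section ExtendCLM

variable {E F Fl : Type} [SeminormedAddCommGroup E] [NormedSpace ℂ E]
    [NormedAddCommGroup F] [NormedSpace ℂ F] [CompleteSpace F]
    [SeminormedAddCommGroup Fl] [NormedSpace ℂ Fl]
    (f : E →L[ℂ] F) (e : E →L[ℂ] Fl) (h_dense : DenseRange e) (h_e : IsUniformInducing e)

noncomputable def extendCLM : Fl →L[ℂ] F :=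
  have cont := (uniformContinuous_uniformly_extend h_e h_dense f.uniformContinuous).continuous
  have eq := uniformly_extend_of_ind h_e h_dense f.uniformContinuous
  { toFun := (h_e.isDenseInducing h_dense).extend f
    map_add' := by
      refine h_dense.induction_on₂ ?_ ?_
      · exact isClosed_eq (cont.comp continuous_add)
          ((cont.comp continuous_fst).add (cont.comp continuous_snd))
      · intro x y
        simp only [eq, ← e.map_add]
        exact f.map_add _ _
    map_smul' := fun k b => by
      simp only [RingHom.id_apply]
      refine h_dense.induction_on b ?_ ?_
      · exact isClosed_eq (cont.comp (continuous_const_smul _))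
          ((continuous_const_smul _).comp cont)
      · intro x
        have h1 : e (k • x) = k • e x := map_smul e k x
        rw [← h1, eq, eq, map_smul]
    cont := cont }

lemma extendCLM_eq (x : E) : extendCLM f e h_dense h_e (e x) = f x :=
  IsDenseInducing.extend_eq (h_e.isDenseInducing h_dense) f.cont _

end ExtendCLM

/-! #### The master lemma: identification of the balanced tensor quotient with `ℓ¹(Z)` -/

theorem master {X W Y Z : Type}
    (ρ : X → W → X) (lam : W → Y → Y) (m : X → Y → Z)
    (hassoc : ∀ x w y, m (ρ x w) y = m x (lam w y))
    (c : Z → X × Y) (hc : ∀ z, m (c z).1 (c z).2 = z)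
    (hreach : ∀ x y, Reach ρ lam (x, y) (c (m x y)))
    (T : Type) [SeminormedAddCommGroup T] [NormedSpace ℂ T]
    (φ : L1 X →ₗ[ℂ] L1 Y →ₗ[ℂ] T)
    (h : IsProjTensor (L1 X) (L1 Y) T φ) :
    ∃ e : (T ⧸ balancer φ (fun x a => convL ρ x a) (fun a y => convL lam a y)) ≃L[ℂ] L1 Z,
      ∀ a b, e (Submodule.Quotient.mk (φ a b)) = convL m a b := by
  haveI : CompleteSpace T := h.complete
  set bal : Submodule ℂ T := balancer φ (fun x a => convL ρ x a) (fun a y => convL lam a y)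
    with hbaldef
  haveI hbalclosed : IsClosed (bal : Set T) := Submodule.isClosed_topologicalClosure _
  haveI : T2Space (T ⧸ bal) := inferInstance
  -- the lift of φ to the algebraic tensor product
  set lφ : L1 X ⊗[ℂ] L1 Y →ₗ[ℂ] T := TensorProduct.lift φ with hlφdef
  -- bound on φ
  have hφ_bound : ∀ (a : L1 X) (b : L1 Y), ‖φ a b‖ ≤ 1 * ‖a‖ * ‖b‖ := by
    intro a b
    have h1 : φ a b = lφ (a ⊗ₜ[ℂ] b) := (TensorProduct.lift.tmul (f' := φ) a b).symm
    rw [h1, h.isometry]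
    rw [one_mul]
    exact projNorm_tmul_le a b
  set φL : L1 X →L[ℂ] L1 Y →L[ℂ] T := LinearMap.mkContinuous₂ φ 1 hφ_bound with hφLdef
  have φL_apply : ∀ a b, φL a b = φ a b := fun a b => rfl
  -- the target bilinear map and its lift
  set B : L1 X →L[ℂ] L1 Y →L[ℂ] L1 Z := convL m with hBdef
  set Blin : L1 X →ₗ[ℂ] L1 Y →ₗ[ℂ] L1 Z :=
    LinearMap.mk₂ ℂ (fun a b => B a b) (fun a a' b => by simp) (fun ca a b => by simp)
      (fun a b b' => by simp) (fun ca a b => by simp) with hBlindef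
  set lβ : L1 X ⊗[ℂ] L1 Y →ₗ[ℂ] L1 Z := TensorProduct.lift Blin with hlβdef
  have hlβ_le : ∀ w, ‖lβ w‖ ≤ projNorm w := by
    intro w
    exact norm_lift_le_projNorm B (fun a b => convL_norm_le m a b) Blin (fun a b => rfl) w
  have hlβφ : ∀ w, ‖lβ w‖ ≤ ‖lφ w‖ := by
    intro w
    rw [h.isometry]
    exact hlβ_le w
  have hlβ_tmul : ∀ (a : L1 X) (b : L1 Y), lβ (a ⊗ₜ[ℂ] b) = convL m a b :=
    fun a b => TensorProduct.lift.tmul a b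
  -- factor lβ through the range of lφ
  have hker : LinearMap.ker lφ ≤ LinearMap.ker lβ := by
    intro w hw
    rw [LinearMap.mem_ker] at hw ⊢
    have h0 : ‖lβ w‖ ≤ 0 := by
      have := hlβφ w
      rwa [hw, norm_zero] at this
    exact norm_le_zero_iff.mp h0
  set S : Submodule ℂ T := LinearMap.range lφ with hSdef
  set g0 : S →ₗ[ℂ] L1 Z :=
    (Submodule.liftQ (LinearMap.ker lφ) lβ hker).comp
      (LinearMap.quotKerEquivRange lφ).symm.toLinearMap with hg0def
  have g0_apply : ∀ (w : L1 X ⊗[ℂ] L1 Y) (hw : lφ w ∈ S), g0 ⟨lφ w, hw⟩ = lβ w := by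
    intro w hw
    have h1 : (LinearMap.quotKerEquivRange lφ).symm ⟨lφ w, hw⟩
        = Submodule.Quotient.mk w := by
      have := LinearMap.quotKerEquivRange_symm_apply_image lφ w hw
      simpa [Submodule.mkQ_apply] using this
    rw [hg0def, LinearMap.comp_apply, LinearEquiv.coe_coe, h1, Submodule.liftQ_apply]
  have g0_bound : ∀ s : S, ‖g0 s‖ ≤ 1 * ‖s‖ := by
    rintro ⟨t, ht⟩
    obtain ⟨w, rfl⟩ := ht
    rw [one_mul]
    have h1 : g0 ⟨lφ w, ⟨w, rfl⟩⟩ = lβ w := g0_apply w ⟨w, rfl⟩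
    rw [h1]
    exact hlβφ w
  set g0L : S →L[ℂ] L1 Z := g0.mkContinuous 1 g0_bound with hg0Ldef
  have g0L_apply : ∀ s : S, g0L s = g0 s := fun s => rfl
  -- extend along the dense isometric inclusion of S in T
  have hdense : DenseRange S.subtypeL := by
    have hd : Dense (S : Set T) := by
      have hdr := h.dense
      have hrange : Set.range ⇑lφ = (S : Set T) := (LinearMap.coe_range lφ).symm
      rwa [DenseRange, hrange] at hdr
    exact hd.denseRange_val
  have hui : IsUniformInducing S.subtypeL := by
    have hiso : Isometry S.subtypeL :=
      AddMonoidHomClass.isometry_of_norm _ (fun s => rfl)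
    exact hiso.isUniformInducing
  set π : T →L[ℂ] L1 Z := extendCLM g0L S.subtypeL hdense hui with hπdef
  have π_lφ : ∀ w, π (lφ w) = lβ w := by
    intro w
    have h1 := extendCLM_eq g0L S.subtypeL hdense hui ⟨lφ w, ⟨w, rfl⟩⟩
    exact h1.trans (g0_apply w ⟨w, rfl⟩)
  have π_φ : ∀ (a : L1 X) (b : L1 Y), π (φ a b) = convL m a b := by
    intro a b
    have h1 : φ a b = lφ (a ⊗ₜ[ℂ] b) := (TensorProduct.lift.tmul (f' := φ) a b).symm
    rw [h1, π_lφ, hlβ_tmul]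
  -- π annihilates the balancer
  have hπbal : bal ≤ LinearMap.ker (π : T →ₗ[ℂ] L1 Z) := by
    rw [hbaldef, balancer]
    refine Submodule.topologicalClosure_minimal _ ?_ (ContinuousLinearMap.isClosed_ker π)
    rw [Submodule.span_le]
    rintro t ⟨x, a, y, rfl⟩
    rw [SetLike.mem_coe, LinearMap.mem_ker, map_sub, ContinuousLinearMap.coe_coe, π_φ, π_φ]
    rw [conv_conv ρ m lam m hassoc x a y]
    exact sub_self _
  -- the induced map on the quotient
  have hπnorm : ∀ t : T, ‖π t‖ ≤ ‖t‖ := by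
    have hclosed : IsClosed {t : T | ‖π t‖ ≤ ‖t‖} :=
      isClosed_le π.continuous.norm continuous_norm
    intro t
    refine hdense.induction_on t hclosed ?_
    intro s
    show ‖π (S.subtypeL s)‖ ≤ ‖S.subtypeL s‖
    rw [extendCLM_eq g0L S.subtypeL hdense hui s]
    exact (g0_bound s).trans_eq (one_mul _)
  set elin : (T ⧸ bal) →ₗ[ℂ] L1 Z := Submodule.liftQ bal π.toLinearMap hπbal with helindef
  have elin_mk : ∀ t : T, elin (Submodule.Quotient.mk t) = π t := fun t => rfl
  have elin_bound : ∀ q : T ⧸ bal, ‖elin q‖ ≤ 1 * ‖q‖ := by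
    intro q
    rw [one_mul]
    refine le_of_forall_pos_le_add (fun ε hε => ?_)
    obtain ⟨t, rfl, ht⟩ := Submodule.Quotient.norm_mk_lt q hε
    rw [elin_mk]
    exact (hπnorm t).trans ht.le
  set eL : (T ⧸ bal) →L[ℂ] L1 Z := elin.mkContinuous 1 elin_bound with heLdef
  have eL_mk : ∀ t : T, eL (Submodule.Quotient.mk t) = π t := fun t => rfl
  -- the continuous quotient map
  set qL : T →L[ℂ] (T ⧸ bal) := bal.mkQ.mkContinuous 1
    (fun t => by simpa using Submodule.Quotient.norm_mk_le bal t) with hqLdef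
  have qL_apply : ∀ t : T, qL t = Submodule.Quotient.mk t := fun t => rfl
  -- the inverse map ψ
  have hψbdd : ∀ z : Z, ‖(Submodule.Quotient.mk (φ (delta (c z).1) (delta (c z).2)) : T ⧸ bal)‖
      ≤ 1 := by
    intro z
    refine (Submodule.Quotient.norm_mk_le _ _).trans ?_
    have := hφ_bound (delta (c z).1) (delta (c z).2)
    rwa [norm_delta, norm_delta, one_mul, mul_one] at this
  set ψ : L1 Z →L[ℂ] (T ⧸ bal) :=
    sumL (fun z => Submodule.Quotient.mk (φ (delta (c z).1) (delta (c z).2))) 1 hψbdd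
    with hψdef
  have ψ_delta : ∀ z : Z, ψ (delta z)
      = Submodule.Quotient.mk (φ (delta (c z).1) (delta (c z).2)) := by
    intro z
    rw [hψdef, sumL_delta]
  -- balancing relations at the level of point masses
  have hstep : ∀ p q : X × Y, Reach ρ lam p q →
      φ (delta p.1) (delta p.2) - φ (delta q.1) (delta q.2) ∈ bal := by
    intro p q hpq
    induction hpq with
    | refl p => simpa using bal.zero_mem
    | symm _ ih => have := bal.neg_mem ih; simpa using this
    | trans _ _ ih1 ih2 => have := bal.add_mem ih1 ih2; simpa using this
    | fwd x w y =>
      rw [hbaldef, balancer]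
      apply Submodule.le_topologicalClosure
      apply Submodule.subset_span
      refine ⟨delta x, delta w, delta y, ?_⟩
      rw [convL_delta, convL_delta]
  -- ψ ∘ B = q ∘ φ
  have hψB : ∀ (a : L1 X) (b : L1 Y),
      ψ (convL m a b) = Submodule.Quotient.mk (φ a b) := by
    have hδ : ∀ x y, ψ (convL m (delta x) (delta y))
        = Submodule.Quotient.mk (φ (delta x) (delta y)) := by
      intro x y
      rw [convL_delta, ψ_delta]
      refine (Submodule.Quotient.eq bal).mpr ?_
      have := hstep _ _ (Reach.symm (hreach x y))
      simpa using this
    have hA : ∀ (y : Y) (a : L1 X),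
        ψ (convL m a (delta y)) = Submodule.Quotient.mk (φ a (delta y)) := by
      intro y a
      have := ext_delta (ψ.comp ((convL m).flip (delta y)))
          (qL.comp (φL.flip (delta y)))
          (fun x => by
            simp only [ContinuousLinearMap.comp_apply, ContinuousLinearMap.flip_apply]
            rw [hδ, qL_apply, φL_apply]) a
      simpa [qL_apply, φL_apply] using this
    intro a b
    have := ext_delta (ψ.comp (convL m a)) (qL.comp (φL a))
        (fun y => by
          simp only [ContinuousLinearMap.comp_apply]
          rw [hA, qL_apply, φL_apply]) b
    simpa [qL_apply, φL_apply] using this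
  -- eL and ψ are inverse
  have hinv1 : ∀ f : L1 Z, eL (ψ f) = f := by
    intro f
    have := ext_delta (eL.comp ψ) (ContinuousLinearMap.id ℂ (L1 Z))
        (fun z => by
          simp only [ContinuousLinearMap.comp_apply, ContinuousLinearMap.id_apply]
          rw [ψ_delta, eL_mk, π_φ, convL_delta, hc]) f
    simpa using this
  have hinv2 : ∀ q : T ⧸ bal, ψ (eL q) = q := by
    have hDc : IsClosed {q : T ⧸ bal | ψ (eL q) = q} :=
      isClosed_eq (ψ.continuous.comp eL.continuous) continuous_id
    have hsub : Set.range (⇑qL ∘ ⇑lφ) ⊆ {q : T ⧸ bal | ψ (eL q) = q} := by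
      rintro _ ⟨w, rfl⟩
      show ψ (eL (qL (lφ w))) = qL (lφ w)
      induction w using TensorProduct.induction_on with
      | zero => simp
      | tmul a b =>
        rw [qL_apply, show lφ (a ⊗ₜ[ℂ] b) = φ a b from TensorProduct.lift.tmul a b,
          eL_mk, π_φ, hψB]
      | add w1 w2 ih1 ih2 =>
        simp only [map_add, ih1, ih2]
    have hdr : DenseRange (⇑qL ∘ ⇑lφ) := by
      have hq : DenseRange ⇑qL := by
        refine Function.Surjective.denseRange ?_
        intro q
        obtain ⟨t, ht⟩ := Submodule.Quotient.mk_surjective bal q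
        exact ⟨t, ht⟩
      exact DenseRange.comp hq h.dense qL.continuous
    intro q
    have huniv : {q : T ⧸ bal | ψ (eL q) = q} = Set.univ := by
      apply Set.eq_univ_of_univ_subset
      calc (Set.univ : Set (T ⧸ bal)) = closure (Set.range (⇑qL ∘ ⇑lφ)) := by
            rw [hdr.closure_range]
        _ ⊆ closure {q : T ⧸ bal | ψ (eL q) = q} := closure_mono hsub
        _ = {q : T ⧸ bal | ψ (eL q) = q} := hDc.closure_eq
    exact (Set.eq_univ_iff_forall.mp huniv q)
  refine ⟨ContinuousLinearEquiv.equivOfInverse eL ψ hinv2 hinv1, ?_⟩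
  intro a b
  rw [ContinuousLinearEquiv.equivOfInverse_apply, eL_mk, π_φ]


/-! #### The partial multiplication of rectangular bands over a group `G` -/

open Classical in
noncomputable def pmul {α β γ G : Type} [Mul G] :
    Option (α × G × β) → Option (β × G × γ) → Option (α × G × γ)
  | some (i, g, j), some (j', h, k) => if j = j' then some (i, g * h, k) else none
  | _, _ => none

lemma pmul_none_left {α β γ G : Type} [Mul G] (b : Option (β × G × γ)) :
    pmul (none : Option (α × G × β)) b = none := rfl

lemma pmul_none_right {α β γ G : Type} [Mul G] (a : Option (α × G × β)) :
    pmul a (none : Option (β × G × γ)) = none := by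
  cases a with
  | none => rfl
  | some p => rfl

open Classical in
lemma pmul_some_some {α β γ G : Type} [Mul G] (i : α) (g : G) (j : β) (j' : β) (h : G) (k : γ) :
    pmul (some (i, g, j)) (some (j', h, k)) = if j = j' then some (i, g * h, k) else none := rfl

lemma pmul_assoc {α β γ δ G : Type} [Group G] (a : Option (α × G × β))
    (b : Option (β × G × γ)) (c : Option (γ × G × δ)) :
    pmul (pmul a b) c = pmul a (pmul b c) := by
  rcases a with _ | ⟨i, g, j⟩
  · rw [pmul_none_left, pmul_none_left, pmul_none_left]
  rcases b with _ | ⟨j', h, k⟩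
  · rw [pmul_none_right, pmul_none_left, pmul_none_left, pmul_none_right]
  rcases c with _ | ⟨k', f, l⟩
  · rw [pmul_none_right, pmul_none_right, pmul_none_right]
  rw [pmul_some_some, pmul_some_some]
  by_cases h1 : j = j'
  · subst h1
    by_cases h2 : k = k'
    · subst h2
      rw [if_pos rfl, if_pos rfl, pmul_some_some, pmul_some_some, if_pos rfl, if_pos rfl,
        mul_assoc]
    · rw [if_pos rfl, if_neg h2, pmul_some_some, if_neg h2, pmul_none_right]
  · by_cases h2 : k = k'
    · subst h2
      rw [if_neg h1, if_pos rfl, pmul_none_left, pmul_some_some, if_neg h1]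
    · rw [if_neg h1, if_neg h2, pmul_none_left, pmul_none_right]

/-- The canonical section of `pmul`. -/
noncomputable def psec {α β δ G : Type} [Monoid G] (b₀ : β) :
    Option (α × G × δ) → Option (α × G × β) × Option (β × G × δ)
  | some (a, g, d) => (some (a, g, b₀), some (b₀, 1, d))
  | none => (none, none)

lemma psec_spec {α β δ G : Type} [Monoid G] (b₀ : β) (z : Option (α × G × δ)) :
    pmul (psec b₀ z).1 (psec b₀ z).2 = z := by
  cases z with
  | none => rfl
  | some p =>
    rcases p with ⟨a, g, d⟩
    show pmul (some (a, g, b₀)) (some (b₀, 1, d)) = some (a, g, d)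
    rw [pmul_some_some, if_pos rfl, mul_one]

lemma preach {α β δ G : Type} [Monoid G] (b₀ : β)
    (x : Option (α × G × β)) (y : Option (β × G × δ)) :
    Reach (pmul : Option (α × G × β) → Option (β × G × β) → Option (α × G × β))
      (pmul : Option (β × G × β) → Option (β × G × δ) → Option (β × G × δ))
      (x, y) (psec b₀ (pmul x y)) := by
  have hnn : ∀ x' : Option (α × G × β),
      Reach (pmul : Option (α × G × β) → Option (β × G × β) → Option (α × G × β))
        (pmul : Option (β × G × β) → Option (β × G × δ) → Option (β × G × δ))
        (x', (none : Option (β × G × δ))) (none, none) := by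
    intro x'
    have h := Reach.fwd (ρ := (pmul : Option (α × G × β) → Option (β × G × β) → _))
      (lam := (pmul : Option (β × G × β) → Option (β × G × δ) → _)) x' none none
    rw [pmul_none_right x', pmul_none_left] at h
    exact h.symm
  rcases x with _ | ⟨i, g, j⟩
  · rw [pmul_none_left]
    show Reach _ _ (none, y) (none, none)
    have h := Reach.fwd (ρ := (pmul : Option (α × G × β) → Option (β × G × β) → _))
      (lam := (pmul : Option (β × G × β) → Option (β × G × δ) → _)) none none y
    rw [pmul_none_left, pmul_none_left] at h
    exact h
  rcases y with _ | ⟨j', h, d⟩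
  · rw [pmul_none_right]
    exact hnn _
  by_cases hj : j = j'
  · subst hj
    rw [pmul_some_some, if_pos rfl]
    show Reach _ _ _ (some (i, g * h, b₀), some (b₀, 1, d))
    have hstep := Reach.fwd (ρ := (pmul : Option (α × G × β) → Option (β × G × β) → _))
      (lam := (pmul : Option (β × G × β) → Option (β × G × δ) → _))
      (some (i, g, j)) (some (j, h, b₀)) (some (b₀, (1:G), d))
    rw [show pmul (some (i, g, j)) (some (j, h, b₀)) = some (i, g * h, b₀) by
        rw [pmul_some_some, if_pos rfl],
      show pmul (some (j, h, b₀)) (some (b₀, (1:G), d)) = some (j, h, d) by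
        rw [pmul_some_some, if_pos rfl, mul_one]] at hstep
    exact hstep.symm
  · rw [pmul_some_some, if_neg hj]
    show Reach _ _ _ (none, none)
    have hstep := Reach.fwd (ρ := (pmul : Option (α × G × β) → Option (β × G × β) → _))
      (lam := (pmul : Option (β × G × β) → Option (β × G × δ) → _))
      (some (i, g, j)) (some (j, (1:G), j)) (some (j', h, d))
    rw [show pmul (some (i, g, j)) (some (j, (1:G), j)) = some (i, g, j) by
        rw [pmul_some_some, if_pos rfl, mul_one],
      show pmul (some (j, (1:G), j)) (some (j', h, d)) = none by
        rw [pmul_some_some, if_neg hj]] at hstep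
    exact hstep.trans (hnn _)

/-- The Brandt multiplication agrees with `pmul`. -/
lemma bmul_eq {I G : Type} [Mul G] (a b : Brandt I G) : a * b = pmul a b := by
  cases a with
  | none => rfl
  | some p =>
    cases b with
    | none => rfl
    | some q =>
      rcases p with ⟨i, g, j⟩
      rcases q with ⟨i', g', j'⟩
      rfl

/-- Packaging the master lemma into a self-inducedness statement. -/
lemma selfInduced_of {S : Type} (μ : S → S → S)
    (hassoc : ∀ a b c : S, μ (μ a b) c = μ a (μ b c))
    (c : S → S × S) (hc : ∀ z, μ (c z).1 (c z).2 = z)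
    (hreach : ∀ x y, Reach μ μ (x, y) (c (μ x y))) :
    SelfInduced (convL μ) := by
  intro T _ _ φ h
  obtain ⟨e, he⟩ := master μ μ μ hassoc c hc hreach T φ h
  refine ⟨e, fun a b => he a b, fun c' a b => ?_, fun a b c' => ?_⟩
  · rw [he, he]
    exact conv_conv μ μ μ μ hassoc c' a b
  · rw [he, he]
    exact (conv_conv μ μ μ μ hassoc a b c').symm

end BrandtAux

end BrandtDev

/-- **Main result.** For nonempty sets `I, J` and a discrete group
`G`, the Brandt semigroup algebras `ℓ¹(B(I,G))` and `ℓ¹(B(J,G))` are self-induced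
Banach algebras and they are Morita equivalent in the sense of Grønbæk. -/
theorem brandt_morita_stmt12 (I J G : Type) [Nonempty I] [Nonempty J] [Group G] :
    ∃ (mulSI : L1 (Brandt I G) →L[ℂ] L1 (Brandt I G) →L[ℂ] L1 (Brandt I G))
      (mulSJ : L1 (Brandt J G) →L[ℂ] L1 (Brandt J G) →L[ℂ] L1 (Brandt J G)),
      (∀ (a b : L1 (Brandt I G)) (s : Brandt I G), mulSI a b s = l1conv a b s) ∧
      (∀ (a b : L1 (Brandt J G)) (s : Brandt J G), mulSJ a b s = l1conv a b s) ∧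
      SelfInduced mulSI ∧
      SelfInduced mulSJ ∧
      MoritaEquivalent mulSI mulSJ := by
  obtain ⟨i₀⟩ := (inferInstance : Nonempty I)
  obtain ⟨j₀⟩ := (inferInstance : Nonempty J)
  refine ⟨BrandtAux.convL (BrandtAux.pmul (α := I) (β := I) (γ := I) (G := G)),
    BrandtAux.convL (BrandtAux.pmul (α := J) (β := J) (γ := J) (G := G)), ?_, ?_, ?_, ?_, ?_⟩
  · intro a b s
    rw [BrandtAux.convL_eval]
    unfold l1conv
    exact tsum_congr fun p => by rw [BrandtAux.bmul_eq p.1 p.2]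
  · intro a b s
    rw [BrandtAux.convL_eval]
    unfold l1conv
    exact tsum_congr fun p => by rw [BrandtAux.bmul_eq p.1 p.2]
  · exact BrandtAux.selfInduced_of _ (fun a b c => BrandtAux.pmul_assoc a b c)
      (BrandtAux.psec i₀) (BrandtAux.psec_spec i₀) (BrandtAux.preach i₀)
  · exact BrandtAux.selfInduced_of _ (fun a b c => BrandtAux.pmul_assoc a b c)
      (BrandtAux.psec j₀) (BrandtAux.psec_spec j₀) (BrandtAux.preach j₀)
  · refine ⟨?_⟩
    exact
      { P := L1 (Option (J × G × I))
        Q := L1 (Option (I × G × J))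
        lP := BrandtAux.convL BrandtAux.pmul
        rP := BrandtAux.convL BrandtAux.pmul
        lQ := BrandtAux.convL BrandtAux.pmul
        rQ := BrandtAux.convL BrandtAux.pmul
        lawP := ⟨fun a a' x =>
            BrandtAux.conv_conv _ _ _ _ (fun u v w => BrandtAux.pmul_assoc u v w) a a' x,
          fun x b b' =>
            BrandtAux.conv_conv _ _ _ _ (fun u v w => BrandtAux.pmul_assoc u v w) x b b',
          fun a x b =>
            BrandtAux.conv_conv _ _ _ _ (fun u v w => BrandtAux.pmul_assoc u v w) a x b⟩
        lawQ := ⟨fun a a' x =>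
            BrandtAux.conv_conv _ _ _ _ (fun u v w => BrandtAux.pmul_assoc u v w) a a' x,
          fun x b b' =>
            BrandtAux.conv_conv _ _ _ _ (fun u v w => BrandtAux.pmul_assoc u v w) x b b',
          fun a x b =>
            BrandtAux.conv_conv _ _ _ _ (fun u v w => BrandtAux.pmul_assoc u v w) a x b⟩
        indPl := by
          intro T _ _ φ h
          exact BrandtAux.master _ _ _ (fun u v w => BrandtAux.pmul_assoc u v w)
            (BrandtAux.psec j₀) (BrandtAux.psec_spec j₀) (BrandtAux.preach j₀) T φ h
        indPr := by
          intro T _ _ φ h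
          exact BrandtAux.master _ _ _ (fun u v w => BrandtAux.pmul_assoc u v w)
            (BrandtAux.psec i₀) (BrandtAux.psec_spec i₀) (BrandtAux.preach i₀) T φ h
        indQl := by
          intro T _ _ φ h
          exact BrandtAux.master _ _ _ (fun u v w => BrandtAux.pmul_assoc u v w)
            (BrandtAux.psec i₀) (BrandtAux.psec_spec i₀) (BrandtAux.preach i₀) T φ h
        indQr := by
          intro T _ _ φ h
          exact BrandtAux.master _ _ _ (fun u v w => BrandtAux.pmul_assoc u v w)
            (BrandtAux.psec j₀) (BrandtAux.psec_spec j₀) (BrandtAux.preach j₀) T φ h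
        isoB := by
          intro T _ _ φ h
          obtain ⟨e, he⟩ := BrandtAux.master _ _ _ (fun u v w => BrandtAux.pmul_assoc u v w)
            (BrandtAux.psec i₀) (BrandtAux.psec_spec i₀) (BrandtAux.preach i₀) T φ h
          refine ⟨e, fun b p q => ?_, fun b p q => ?_⟩
          · rw [he, he]
            exact BrandtAux.conv_conv _ _ _ _ (fun u v w => BrandtAux.pmul_assoc u v w) b p q
          · rw [he, he]
            exact (BrandtAux.conv_conv _ _ _ _
              (fun u v w => BrandtAux.pmul_assoc u v w) p q b).symm
        isoA := by
          intro T _ _ φ h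
          obtain ⟨e, he⟩ := BrandtAux.master _ _ _ (fun u v w => BrandtAux.pmul_assoc u v w)
            (BrandtAux.psec j₀) (BrandtAux.psec_spec j₀) (BrandtAux.preach j₀) T φ h
          refine ⟨e, fun a q p => ?_, fun a q p => ?_⟩
          · rw [he, he]
            exact BrandtAux.conv_conv _ _ _ _ (fun u v w => BrandtAux.pmul_assoc u v w) a q p
          · rw [he, he]
            exact (BrandtAux.conv_conv _ _ _ _
              (fun u v w => BrandtAux.pmul_assoc u v w) q p a).symm }
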